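/- On the domain ξ > 0, η > 0 with conjugate momenta p_ξ, p_η, p_φ, let I₂ = (1/2)p_φ² + k₁/cos²φ + k₂/sin²φ and H = (1/(2(η² + ξ²)))(p_ξ² + p_η² − 4k + (1/η² + 1/ξ²)·2I₂). Then I₄ = (η²(p_ξ² + 2I₂/ξ² − 2k) − ξ²(p_η² + 2I₂/η² − 2k))/(η² + ξ²) satisfies {H, I₄} = 0. -/

import Mathlib

/-- Canonical Poisson bracket on ℝⁿ × ℝⁿ (positions, momenta). -/
noncomputable def pb {n : ℕ} (f g : (Fin n → ℝ) × (Fin n → ℝ) → ℝ) :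
    (Fin n → ℝ) × (Fin n → ℝ) → ℝ :=
  fun z => ∑ i, (fderiv ℝ f z (Pi.single i 1, 0) * fderiv ℝ g z (0, Pi.single i 1)
    - fderiv ℝ f z (0, Pi.single i 1) * fderiv ℝ g z (Pi.single i 1, 0))

/-- I₂ = (1/2)p_φ² + k₁/cos²φ + k₂/sin²φ, viewed in rotational-parabolic coordinates.
Coordinates: ξ = z.1 0, η = z.1 1, φ = z.1 2 with momenta p_ξ = z.2 0, p_η = z.2 1,
p_φ = z.2 2. -/
noncomputable def Itwo (k₁ k₂ : ℝ) (w : (Fin 3 → ℝ) × (Fin 3 → ℝ)) : ℝ :=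
  (1 / 2) * (w.2 2) ^ 2 + k₁ / Real.cos (w.1 2) ^ 2 + k₂ / Real.sin (w.1 2) ^ 2

abbrev E3 := (Fin 3 → ℝ) × (Fin 3 → ℝ)
noncomputable def qc (i : Fin 3) : E3 →L[ℝ] ℝ :=
  (ContinuousLinearMap.proj i).comp (ContinuousLinearMap.fst ℝ (Fin 3 → ℝ) (Fin 3 → ℝ))
noncomputable def pc (i : Fin 3) : E3 →L[ℝ] ℝ :=
  (ContinuousLinearMap.proj i).comp (ContinuousLinearMap.snd ℝ (Fin 3 → ℝ) (Fin 3 → ℝ))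
@[simp] lemma qc_apply (i : Fin 3) (w : E3) : qc i w = w.1 i := rfl
@[simp] lemma pc_apply (i : Fin 3) (w : E3) : pc i w = w.2 i := rfl

lemma hfd_sq {x : E3} {f : E3 → ℝ} {f' : E3 →L[ℝ] ℝ} (h : HasFDerivAt f f' x) :
    HasFDerivAt (fun y => f y ^ 2) ((2 * f x) • f') x := by
  simpa [pow_two, two_mul, add_smul, Pi.mul_def] using h.mul h

lemma hfd_div {x : E3} {c d : E3 → ℝ} {c' d' : E3 →L[ℝ] ℝ}
    (hc : HasFDerivAt c c' x) (hd : HasFDerivAt d d' x) (hne : d x ≠ 0) :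
    HasFDerivAt (fun y => c y / d y)
      (((d x)⁻¹) • c' + (-(c x) * ((d x) ^ 2)⁻¹) • d') x := by
  have h := hc.mul ((hasDerivAt_inv hne).comp_hasFDerivAt x hd)
  have hfun : (fun y => c y / d y) = fun y => c y * ((fun y => y⁻¹) ∘ d) y := by
    funext y; simp [div_eq_mul_inv, Function.comp]
  rw [hfun]
  have heq : ((d x)⁻¹) • c' + (-(c x) * ((d x) ^ 2)⁻¹) • d'
      = c x • (-((d x) ^ 2)⁻¹) • d' + ((fun y => y⁻¹) ∘ d) x • c' := by
    refine ContinuousLinearMap.ext fun v => ?_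
    simp [smul_smul, Function.comp]
    ring
  rw [heq]; exact h


set_option maxHeartbeats 4000000 in
/-- H = (1/(2(η²+ξ²)))(p_ξ² + p_η² − 4k + (1/η² + 1/ξ²)·2I₂) Poisson-commutes with
I₄ = (η²(p_ξ² + 2I₂/ξ² − 2k) − ξ²(p_η² + 2I₂/η² − 2k))/(η² + ξ²) on the domain
ξ, η > 0, sin φ ≠ 0, cos φ ≠ 0. -/
theorem stmt13 (k k₁ k₂ : ℝ) :
    ∀ z : (Fin 3 → ℝ) × (Fin 3 → ℝ), 0 < z.1 0 → 0 < z.1 1 →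
      Real.sin (z.1 2) ≠ 0 → Real.cos (z.1 2) ≠ 0 →
    pb (fun w => (1 / (2 * ((w.1 1) ^ 2 + (w.1 0) ^ 2)))
          * ((w.2 0) ^ 2 + (w.2 1) ^ 2 - 4 * k
            + (1 / (w.1 1) ^ 2 + 1 / (w.1 0) ^ 2) * (2 * Itwo k₁ k₂ w)))
       (fun w => ((w.1 1) ^ 2 * ((w.2 0) ^ 2 + 2 * Itwo k₁ k₂ w / (w.1 0) ^ 2 - 2 * k)
          - (w.1 0) ^ 2 * ((w.2 1) ^ 2 + 2 * Itwo k₁ k₂ w / (w.1 1) ^ 2 - 2 * k))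
          / ((w.1 1) ^ 2 + (w.1 0) ^ 2)) z = 0 := by
  intro z hx hy hs hc
  have hx' : z.1 0 ≠ 0 := ne_of_gt hx
  have hy' : z.1 1 ≠ 0 := ne_of_gt hy
  have hx2 : (z.1 0) ^ 2 ≠ 0 := pow_ne_zero _ hx'
  have hy2 : (z.1 1) ^ 2 ≠ 0 := pow_ne_zero _ hy'
  have hden : (z.1 1) ^ 2 + (z.1 0) ^ 2 ≠ 0 := by positivity
  have h2den : 2 * ((z.1 1) ^ 2 + (z.1 0) ^ 2) ≠ 0 := by positivity
  have hc2 : Real.cos (z.1 2) ^ 2 ≠ 0 := pow_ne_zero _ hc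
  have hs2 : Real.sin (z.1 2) ^ 2 ≠ 0 := pow_ne_zero _ hs
  have hq0 : HasFDerivAt (fun w : E3 => w.1 0) (qc 0) z := (qc 0).hasFDerivAt
  have hq1 : HasFDerivAt (fun w : E3 => w.1 1) (qc 1) z := (qc 1).hasFDerivAt
  have hq2 : HasFDerivAt (fun w : E3 => w.1 2) (qc 2) z := (qc 2).hasFDerivAt
  have hp0 : HasFDerivAt (fun w : E3 => w.2 0) (pc 0) z := (pc 0).hasFDerivAt
  have hp1 : HasFDerivAt (fun w : E3 => w.2 1) (pc 1) z := (pc 1).hasFDerivAt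
  have hp2 : HasFDerivAt (fun w : E3 => w.2 2) (pc 2) z := (pc 2).hasFDerivAt
  have hcos : HasFDerivAt (fun w : E3 => Real.cos (w.1 2)) ((-Real.sin (z.1 2)) • qc 2) z :=
    (Real.hasDerivAt_cos _).comp_hasFDerivAt z hq2
  have hsin : HasFDerivAt (fun w : E3 => Real.sin (w.1 2)) ((Real.cos (z.1 2)) • qc 2) z :=
    (Real.hasDerivAt_sin _).comp_hasFDerivAt z hq2
  have hI := (((hfd_sq hp2).const_mul (1/2 : ℝ)).add
    (hfd_div (hasFDerivAt_const k₁ z) (hfd_sq hcos) hc2)).add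
     (hfd_div (hasFDerivAt_const k₂ z) (hfd_sq hsin) hs2)
  have hI' : HasFDerivAt
      (fun x : E3 => 1 / 2 * x.2 2 ^ 2 + k₁ / Real.cos (x.1 2) ^ 2 + k₂ / Real.sin (x.1 2) ^ 2)
      ((2 * k₁ * Real.sin (z.1 2) / Real.cos (z.1 2) ^ 3
        - 2 * k₂ * Real.cos (z.1 2) / Real.sin (z.1 2) ^ 3) • qc 2 + (z.2 2) • pc 2) z := by
    simp only [Pi.add_def] at hI
    refine hI.congr_fderiv ?_
    refine ContinuousLinearMap.ext fun v => ?_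
    simp only [ContinuousLinearMap.add_apply, ContinuousLinearMap.smul_apply,
      ContinuousLinearMap.zero_apply, qc_apply, pc_apply, smul_eq_mul]
    field_simp
    ring
  have hH := (hfd_div (hasFDerivAt_const 1 z)
      (((hfd_sq hq1).add (hfd_sq hq0)).const_mul 2) h2den).mul
    ((((hfd_sq hp0).add (hfd_sq hp1)).sub_const (4*k)).add
      (((hfd_div (hasFDerivAt_const 1 z) (hfd_sq hq1) hy2).add
        (hfd_div (hasFDerivAt_const 1 z) (hfd_sq hq0) hx2)).mul (hI'.const_mul 2)))
  have hG := hfd_div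
    (((hfd_sq hq1).mul (((hfd_sq hp0).add
        (hfd_div (hI'.const_mul 2) (hfd_sq hq0) hx2)).sub_const (2*k))).sub
     ((hfd_sq hq0).mul (((hfd_sq hp1).add
        (hfd_div (hI'.const_mul 2) (hfd_sq hq1) hy2)).sub_const (2*k))))
    ((hfd_sq hq1).add (hfd_sq hq0)) hden
  simp only [pb, Itwo, Fin.sum_univ_three]
  beta_reduce at hH hG
  simp only [Pi.add_def, Pi.mul_def, Pi.sub_def] at hH hG
  rw [hH.fderiv, hG.fderiv]
  simp only [ContinuousLinearMap.add_apply, ContinuousLinearMap.sub_apply,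
    ContinuousLinearMap.smul_apply, ContinuousLinearMap.zero_apply, qc_apply, pc_apply,
    smul_eq_mul]
  set J := 2 * k₁ * Real.sin (z.1 2) / Real.cos (z.1 2) ^ 3
        - 2 * k₂ * Real.cos (z.1 2) / Real.sin (z.1 2) ^ 3 with hJdef
  set IV := 1 / 2 * z.2 2 ^ 2 + k₁ / Real.cos (z.1 2) ^ 2 + k₂ / Real.sin (z.1 2) ^ 2 with hIVdef
  norm_num [Pi.single_apply, show ((2:Fin 3) = 0) = False by decide, show ((2:Fin 3) = 1) = False by decide,
    show ((1:Fin 3) = 0) = False by decide, show ((0:Fin 3) = 1) = False by decide,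
    show ((0:Fin 3) = 2) = False by decide, show ((1:Fin 3) = 2) = False by decide]
  field_simp
  ring
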